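/- Let $t \ge 2$ be an integer, let $p \in (0, 1/2]$ and $\gamma' \in (0,1]$, and let $a, g, z \in [0,1]$ with $p \le 1/t$. Let $A \sim \mathrm{Ber}(p)$ and $K \sim \mathrm{Ber}(\gamma')$ be independent, and define the random variable $Y$ as follows: if $A = 1$ then $Y = \left(1 - \frac{A K}{t p \gamma'}\right) g - \frac{t-1}{t} a$ (with $AK$ evaluated on the realization), and if $A = 0$ then $Y = \frac{1}{1-p}\left(\frac{t-1}{t} a + \frac{1}{t} g - p g\right) - \frac{t-1}{t} a$. Then $\mathbb{E}[Y^2] \le \frac{30}{t^2 \, p \, \gamma'}$. -/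

import Mathlib

set_option maxHeartbeats 4000000


/-- Single-step second-moment bound for the error increment of the subsampled greedy
estimator for a not-yet-activated point: averaging over the independent Bernoulli
draws `A ~ Ber(p)` and `K ~ Ber(γ')`, the expected square of the increment is at
most `30 / (t² p γ')`. -/
theorem stmt17 (t : ℕ) (ht : 2 ≤ t) (p γ' : ℝ) (hp0 : 0 < p) (hp : p ≤ 1 / 2)
    (hpt : p ≤ 1 / (t : ℝ)) (hγ0 : 0 < γ') (hγ1 : γ' ≤ 1)
    (a g z : ℝ) (ha : a ∈ Set.Icc (0:ℝ) 1) (hg : g ∈ Set.Icc (0:ℝ) 1)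
    (hz : z ∈ Set.Icc (0:ℝ) 1) :
    p * γ' * ((1 - 1 / ((t : ℝ) * p * γ')) * g - ((t : ℝ) - 1) / t * a) ^ 2
      + p * (1 - γ') * (g - ((t : ℝ) - 1) / t * a) ^ 2
      + (1 - p) * ((1 / (1 - p)) * (((t : ℝ) - 1) / t * a + (1 / t) * g - p * g)
            - ((t : ℝ) - 1) / t * a) ^ 2
      ≤ 30 / ((t : ℝ) ^ 2 * p * γ') := by
  obtain ⟨ha0, ha1⟩ := ha
  obtain ⟨hg0, hg1⟩ := hg
  set T : ℝ := (t : ℝ) with hTdef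
  have hT : (2:ℝ) ≤ T := by rw [hTdef]; exact_mod_cast ht
  have hT0 : (0:ℝ) < T := by linarith
  have hTp : T * p ≤ 1 := by
    rw [le_div_iff₀ hT0] at hpt; linarith
  have hq0 : 0 < T * p * γ' := by positivity
  have hq1 : T * p * γ' ≤ 1 := by nlinarith
  have hD0 : 0 < T ^ 2 * p * γ' := by positivity
  have hc0 : 0 ≤ (T - 1) / T := div_nonneg (by linarith) hT0.le
  have hc1 : (T - 1) / T ≤ 1 := by
    rw [div_le_one hT0]; linarith
  have hca0 : 0 ≤ (T - 1) / T * a := mul_nonneg hc0 ha0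
  have hca1 : (T - 1) / T * a ≤ 1 := by nlinarith
  -- Term 1
  have hinv1 : 1 - 1 / (T * p * γ') ≤ 0 := by
    have : 1 ≤ 1 / (T * p * γ') := by
      rw [le_div_iff₀ hq0]; linarith
    linarith
  have hX1lo : -(1 / (T * p * γ')) ≤ (1 - 1 / (T * p * γ')) * g - (T - 1) / T * a := by
    have h1 : 0 ≤ (1 - 1 / (T * p * γ')) * (g - 1) := by
      nlinarith [mul_nonneg (neg_nonneg.2 hinv1) (show (0:ℝ) ≤ 1 - g by linarith)]
    nlinarith
  have hX1hi : (1 - 1 / (T * p * γ')) * g - (T - 1) / T * a ≤ 1 / (T * p * γ') := by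
    have h1 : (1 - 1 / (T * p * γ')) * g ≤ 0 := mul_nonpos_of_nonpos_of_nonneg hinv1 hg0
    have h2 : 0 < 1 / (T * p * γ') := by positivity
    linarith
  have hX1sq : ((1 - 1 / (T * p * γ')) * g - (T - 1) / T * a) ^ 2 ≤ (1 / (T * p * γ')) ^ 2 :=
    sq_le_sq' hX1lo hX1hi
  have h1 : p * γ' * ((1 - 1 / (T * p * γ')) * g - (T - 1) / T * a) ^ 2
      ≤ 1 / (T ^ 2 * p * γ') := by
    have heq : p * γ' * (1 / (T * p * γ')) ^ 2 = 1 / (T ^ 2 * p * γ') := by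
      field_simp
    calc p * γ' * ((1 - 1 / (T * p * γ')) * g - (T - 1) / T * a) ^ 2
        ≤ p * γ' * (1 / (T * p * γ')) ^ 2 := by
          exact mul_le_mul_of_nonneg_left hX1sq (by positivity)
      _ = 1 / (T ^ 2 * p * γ') := heq
  -- Term 2
  have hX2sq : (g - (T - 1) / T * a) ^ 2 ≤ 1 := by
    nlinarith
  have hple : p ≤ 3 / (T ^ 2 * p * γ') := by
    rw [le_div_iff₀ hD0]
    have hTp0 : 0 ≤ T * p := mul_nonneg hT0.le hp0.le
    have hTp2 : (T * p) ^ 2 ≤ 1 := by nlinarith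
    calc p * (T ^ 2 * p * γ') = (T * p) ^ 2 * γ' := by ring
      _ ≤ 1 * 1 := mul_le_mul hTp2 hγ1 hγ0.le zero_le_one
      _ ≤ 3 := by norm_num
  have h2 : p * (1 - γ') * (g - (T - 1) / T * a) ^ 2 ≤ 3 / (T ^ 2 * p * γ') := by
    have hb : p * (1 - γ') * (g - (T - 1) / T * a) ^ 2 ≤ p := by
      calc p * (1 - γ') * (g - (T - 1) / T * a) ^ 2
          ≤ p * (1 - γ') := mul_le_of_le_one_right (by nlinarith) hX2sq
        _ ≤ p := by nlinarith
    linarith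
  -- Term 3
  have h1p : (0:ℝ) < 1 - p := by linarith
  have hX3 : (1 / (1 - p)) * ((T - 1) / T * a + (1 / T) * g - p * g) - (T - 1) / T * a
      = (1 / (1 - p)) * (p * ((T - 1) / T * a) + (1 / T) * g - p * g) := by
    field_simp; ring
  have hNlo : -(2 / T) ≤ p * ((T - 1) / T * a) + (1 / T) * g - p * g := by
    have h1 : 0 ≤ p * ((T - 1) / T * a) := mul_nonneg hp0.le hca0
    have h2 : 0 ≤ (1 / T) * g := by positivity
    have h3 : p * g ≤ p := by nlinarith
    have h4 : p ≤ 2 / T := by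
      rw [le_div_iff₀ hT0]; linarith
    linarith
  have hNhi : p * ((T - 1) / T * a) + (1 / T) * g - p * g ≤ 2 / T := by
    have h1 : p * ((T - 1) / T * a) ≤ p := by nlinarith
    have h2 : (1 / T) * g ≤ 1 / T := by
      have : (0:ℝ) < 1 / T := by positivity
      nlinarith
    have h3 : 0 ≤ p * g := mul_nonneg hp0.le hg0
    have h4 : p ≤ 1 / T := hpt
    have h5 : 1 / T + 1 / T = 2 / T := by ring
    linarith
  have hNsq : (p * ((T - 1) / T * a) + (1 / T) * g - p * g) ^ 2 ≤ (2 / T) ^ 2 :=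
    sq_le_sq' hNlo hNhi
  have h3 : (1 - p) * ((1 / (1 - p)) * ((T - 1) / T * a + (1 / T) * g - p * g)
      - (T - 1) / T * a) ^ 2 ≤ 8 / (T ^ 2 * p * γ') := by
    rw [hX3]
    set N := p * ((T - 1) / T * a) + (1 / T) * g - p * g with hN
    have heq : (1 - p) * ((1 / (1 - p)) * N) ^ 2 = (1 / (1 - p)) * N ^ 2 := by
      field_simp
    rw [heq]
    have hinv : 1 / (1 - p) ≤ 2 := by
      rw [div_le_iff₀ h1p]; linarith
    have hNsq' : N ^ 2 ≤ 4 / T ^ 2 := by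
      have : (2 / T) ^ 2 = 4 / T ^ 2 := by field_simp; ring
      linarith [hNsq, this.symm.le]
    have hstep : (1 / (1 - p)) * N ^ 2 ≤ 2 * (4 / T ^ 2) := by
      have h0 : 0 ≤ N ^ 2 := sq_nonneg N
      have h0' : 0 < 1 / (1 - p) := by positivity
      nlinarith
    have hfin : 2 * (4 / T ^ 2) ≤ 8 / (T ^ 2 * p * γ') := by
      rw [show (2:ℝ) * (4 / T ^ 2) = 8 / T ^ 2 by ring,
        div_le_div_iff₀ (by positivity) hD0]
      have hpg : p * γ' ≤ 1 := by nlinarith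
      have hT2 : (0:ℝ) ≤ T ^ 2 := by positivity
      nlinarith [mul_le_mul_of_nonneg_left hpg hT2]
    linarith
  have hfinal : (1:ℝ) / (T ^ 2 * p * γ') + 3 / (T ^ 2 * p * γ') + 8 / (T ^ 2 * p * γ')
      ≤ 30 / (T ^ 2 * p * γ') := by
    rw [← add_div, ← add_div, div_le_div_iff₀ hD0 hD0]
    nlinarith
  linarith
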